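/- For every real t with |t| < π/2, the series ∑_{n=0}^∞ K n 3 · tⁿ/n! converges and its sum equals (3/(1 − sin t)³)·( sin t·(3·sin t + 7) − t·cos t·(5 + sin t) ); that is, the exponential generating function for the multiboundary singularities B_n^3 is K_3(t) = 3( sin t(3 sin t + 7) − t cos t(5 + sin t) )/(1 − sin t)³. (The paper misprints the overall constant 3 as 7; the constant 3 is the correct one, as verified by the coefficients K 1 3 = 6 and K 3 3 = 348.) -/

import Mathlib

/-- The Bernoulli–Euler (zigzag, up-down) numbers: `A 0 = 1`, `A 1 = 1`, and
`2 * A (n+1) = ∑ k in range (n+1), (n.choose k) * A k * A (n-k)`. -/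
def A : ℕ → ℕ
  | 0 => 1
  | 1 => 1
  | n + 2 =>
      (∑ k ∈ (Finset.range (n + 2)).attach,
        Nat.choose (n + 1) k.1 * A k.1 * A (n + 1 - k.1)) / 2
decreasing_by
  · have := Finset.mem_range.mp k.2; omega
  · have := Finset.mem_range.mp k.2; omega

/-- `K n l` : number of connected components of the space of very nice
M-morsifications of the multiboundary singularity `B_n^l`, extended by the
recurrence `K n (l+1) = K (n+2) l − (n+2)·l·K (n+2) (l−1)` for `l ≥ 1`,
with `K n 0 = A (n-1)` for `n ≥ 1`, `K n 0 = 0` for `n ≤ 0`,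
and `K n 1 = K (n+2) 0`. -/
def K : ℤ → ℕ → ℤ
  | n, 0 => if 1 ≤ n then (A (n - 1).toNat : ℤ) else 0
  | n, 1 => K (n + 2) 0
  | n, (l + 2) => K (n + 2) (l + 1) - (n + 2) * (l + 1) * K (n + 2) l

namespace EgfAux

open Complex Finset

noncomputable section

/-! ### Arithmetic facts about `A` and `K` -/

lemma A_def (n : ℕ) : A (n + 2) =
    (∑ k ∈ Finset.range (n + 2), Nat.choose (n + 1) k * A k * A (n + 1 - k)) / 2 := by
  rw [A]
  congr 1
  exact Finset.sum_attach (Finset.range (n + 2))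
    (fun k => Nat.choose (n + 1) k * A k * A (n + 1 - k))

lemma even_conv (n : ℕ) :
    2 * A (n + 2) = ∑ k ∈ Finset.range (n + 2), Nat.choose (n + 1) k * A k * A (n + 1 - k) := by
  set f : ℕ → ℕ := fun k => Nat.choose (n + 1) k * A k * A (n + 1 - k) with hf
  have hsymm : ∀ k ≤ n + 1, f (n + 1 - k) = f k := by
    intro k hk
    simp only [hf]
    rw [Nat.choose_symm hk, show n + 1 - (n + 1 - k) = k by omega]
    ring
  have hbij : ∀ a b : ℕ, b ≤ n + 2 → a + b = n + 2 →
      ∑ k ∈ Finset.Ico a (n + 2), f k = ∑ k ∈ Finset.Ico 0 b, f k := by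
    intro a b hb hab
    apply Finset.sum_nbij' (fun k => n + 1 - k) (fun k => n + 1 - k)
    · intro x hx; simp only [Finset.mem_Ico] at *; omega
    · intro x hx; simp only [Finset.mem_Ico] at *; omega
    · intro x hx; simp only [Finset.mem_Ico] at hx; omega
    · intro x hx; simp only [Finset.mem_Ico] at hx; omega
    · intro x hx; simp only [Finset.mem_Ico] at hx
      exact (hsymm x (by omega)).symm
  have heven : 2 ∣ ∑ k ∈ Finset.range (n + 2), f k := by
    rw [Finset.range_eq_Ico]
    rcases Nat.even_or_odd (n + 1) with ⟨m, hm⟩ | ⟨m, hm⟩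
    · have hm1 : 1 ≤ m := by omega
      rw [← Finset.sum_Ico_consecutive f (by omega : 0 ≤ m + 1) (by omega : m + 1 ≤ n + 2)]
      rw [hbij (m + 1) m (by omega) (by omega)]
      rw [Finset.sum_Ico_succ_top (Nat.zero_le m)]
      have hfm : 2 ∣ f m := by
        have h2 := Nat.choose_succ_succ (2 * m - 1) (m - 1)
        simp only [Nat.succ_eq_add_one] at h2
        rw [show 2 * m - 1 + 1 = 2 * m by omega, show m - 1 + 1 = m by omega] at h2
        have hsy := Nat.choose_symm (show m - 1 ≤ 2 * m - 1 by omega)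
        rw [show 2 * m - 1 - (m - 1) = m by omega] at hsy
        have hdvd : 2 ∣ (n + 1).choose m := by
          rw [show n + 1 = 2 * m by omega, h2, hsy]
          omega
        simp only [hf]
        exact (hdvd.mul_right (A m)).mul_right (A (n + 1 - m))
      omega
    · rw [← Finset.sum_Ico_consecutive f (by omega : 0 ≤ m + 1) (by omega : m + 1 ≤ n + 2)]
      rw [hbij (m + 1) (m + 1) (by omega) (by omega)]
      omega
  have hrw : ∑ k ∈ Finset.range (n + 2), Nat.choose (n + 1) k * A k * A (n + 1 - k)
      = ∑ k ∈ Finset.range (n + 2), f k := rfl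
  obtain ⟨c, hc⟩ := heven
  rw [A_def, hrw, hc]
  omega

lemma K3_eq (n : ℕ) : K (n : ℤ) 3 = (A (n + 5) : ℤ) - (3 * (n : ℤ) + 8) * (A (n + 3) : ℤ) := by
  show K (n : ℤ) (1 + 2) = _
  simp only [K]
  split_ifs with h1 h2
  · rw [show ((n : ℤ) + 2 + 2 + 2 - 1).toNat = n + 5 by omega,
      show ((n : ℤ) + 2 + 2 - 1).toNat = n + 3 by omega]
    push_cast
    ring
  all_goals (exfalso; omega)

/-! ### The domain -/

def Udom : Set ℂ := {z | Complex.sin z ≠ 1}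

lemma Udom_open : IsOpen Udom :=
  isOpen_compl_singleton.preimage Complex.continuous_sin

lemma one_sub_ne {z : ℂ} (hz : z ∈ Udom) : 1 - Complex.sin z ≠ 0 :=
  sub_ne_zero.mpr (Ne.symm hz)

lemma zero_mem_Udom : (0 : ℂ) ∈ Udom := by
  simp [Udom]

lemma ball_subset_Udom : Metric.ball (0 : ℂ) (Real.pi / 2) ⊆ Udom := by
  intro z hz h1
  have h1' : Complex.sin z = 1 := h1
  have hc : Complex.cos z = 0 := by
    have h := Complex.sin_sq_add_cos_sq z
    rw [h1'] at h
    have : Complex.cos z ^ 2 = 0 := by linear_combination h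
    exact pow_eq_zero_iff (two_ne_zero) |>.mp this
  obtain ⟨k, hk⟩ := Complex.cos_eq_zero_iff.mp hc
  have hzval : z = (((2 * k + 1 : ℤ) : ℝ) * (Real.pi / 2) : ℝ) := by
    rw [hk]; push_cast; ring
  have hnorm : ‖z‖ = |((2 * k + 1 : ℤ) : ℝ)| * (Real.pi / 2) := by
    rw [hzval]
    rw [Complex.norm_real, Real.norm_eq_abs, abs_mul,
      abs_of_pos (by positivity : (0:ℝ) < Real.pi / 2)]
  have hk1 : (1 : ℝ) ≤ |((2 * k + 1 : ℤ) : ℝ)| := by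
    have : (1 : ℤ) ≤ |2 * k + 1| := Int.one_le_abs (by omega)
    calc (1:ℝ) ≤ ((|2 * k + 1| : ℤ) : ℝ) := by exact_mod_cast this
    _ = |((2 * k + 1 : ℤ) : ℝ)| := by push_cast [Int.cast_abs]; ring_nf
  have hlt : ‖z‖ < Real.pi / 2 := by simpa [Metric.mem_ball] using hz
  rw [hnorm] at hlt
  nlinarith [Real.pi_pos]

/-! ### The functions and their derivatives -/

def g0 : ℂ → ℂ := fun z => Complex.cos z * (1 - Complex.sin z)⁻¹
def g1 : ℂ → ℂ := fun z => (1 - Complex.sin z)⁻¹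
def g2 : ℂ → ℂ := fun z => Complex.cos z * ((1 - Complex.sin z)⁻¹) ^ 2
def g3 : ℂ → ℂ := fun z => (2 + Complex.sin z) * ((1 - Complex.sin z)⁻¹) ^ 2
def g4 : ℂ → ℂ := fun z => Complex.cos z * (5 + Complex.sin z) * ((1 - Complex.sin z)⁻¹) ^ 3
def g5 : ℂ → ℂ :=
  fun z => (Complex.sin z ^ 2 + 13 * Complex.sin z + 16) * ((1 - Complex.sin z)⁻¹) ^ 3

lemma hinv {z : ℂ} (hz : z ∈ Udom) :
    HasDerivAt (fun w => (1 - Complex.sin w)⁻¹)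
      (-(0 - Complex.cos z) / (1 - Complex.sin z) ^ 2) z :=
  ((hasDerivAt_const z (1:ℂ)).sub (Complex.hasDerivAt_sin z)).inv (one_sub_ne hz)

lemma hd_g0 {z : ℂ} (hz : z ∈ Udom) : HasDerivAt g0 (g1 z) z := by
  have h := (Complex.hasDerivAt_cos z).mul (hinv hz)
  refine h.congr_deriv ?_
  symm
  have hpy := Complex.sin_sq_add_cos_sq z
  have h1 := one_sub_ne hz
  unfold g1
  field_simp
  linear_combination (-1) * hpy

lemma hd_g1 {z : ℂ} (hz : z ∈ Udom) : HasDerivAt g1 (g2 z) z := by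
  have h := hinv hz
  refine h.congr_deriv ?_
  symm
  have h1 := one_sub_ne hz
  unfold g2
  field_simp
  ring

lemma hd_g2 {z : ℂ} (hz : z ∈ Udom) : HasDerivAt g2 (g3 z) z := by
  have h := (Complex.hasDerivAt_cos z).mul ((hinv hz).pow 2)
  refine h.congr_deriv ?_
  symm
  have hpy := Complex.sin_sq_add_cos_sq z
  have h1 := one_sub_ne hz
  unfold g3
  simp only [Pi.pow_apply, Pi.add_apply, Pi.mul_apply, Nat.cast_ofNat, Nat.reduceSub]
  field_simp
  linear_combination (-2) * hpy

lemma hd_g3 {z : ℂ} (hz : z ∈ Udom) : HasDerivAt g3 (g4 z) z := by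
  have h := ((hasDerivAt_const z (2:ℂ)).add (Complex.hasDerivAt_sin z)).mul ((hinv hz).pow 2)
  refine h.congr_deriv ?_
  symm
  have h1 := one_sub_ne hz
  unfold g4
  simp only [Pi.pow_apply, Pi.add_apply, Pi.mul_apply, Nat.cast_ofNat, Nat.reduceSub]
  field_simp
  ring

lemma hd_g4 {z : ℂ} (hz : z ∈ Udom) : HasDerivAt g4 (g5 z) z := by
  have h := ((Complex.hasDerivAt_cos z).mul
      ((hasDerivAt_const z (5:ℂ)).add (Complex.hasDerivAt_sin z))).mul ((hinv hz).pow 3)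
  refine h.congr_deriv ?_
  symm
  have hpy := Complex.sin_sq_add_cos_sq z
  have h1 := one_sub_ne hz
  unfold g5
  simp only [Pi.pow_apply, Pi.add_apply, Pi.mul_apply, Nat.cast_ofNat, Nat.reduceSub]
  field_simp
  linear_combination (-(2 * Complex.sin z + 16)) * hpy

/-! ### Generic iterated-derivative lemmas -/

variable {V : Set ℂ}

lemma itdiff (hV : IsOpen V) {f : ℂ → ℂ} (hf : DifferentiableOn ℂ f V) (k : ℕ) :
    DifferentiableOn ℂ (iteratedDeriv k f) V := by
  induction k with
  | zero => exact hf
  | succ k ih =>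
      rw [iteratedDeriv_succ]
      exact ((ih.analyticOnNhd hV).deriv).differentiableOn

lemma hasDerivAt_iteratedDeriv (hV : IsOpen V) {f : ℂ → ℂ} (hf : DifferentiableOn ℂ f V)
    (k : ℕ) {z : ℂ} (hz : z ∈ V) :
    HasDerivAt (iteratedDeriv k f) (iteratedDeriv (k + 1) f z) z := by
  have h := ((itdiff hV hf k).differentiableAt (hV.mem_nhds hz)).hasDerivAt
  rwa [show deriv (iteratedDeriv k f) z = iteratedDeriv (k+1) f z by
    rw [iteratedDeriv_succ]] at h

lemma deriv_step {f gk gk1 : ℂ → ℂ} {k : ℕ} (hV : IsOpen V)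
    (hk : ∀ z ∈ V, iteratedDeriv k f z = gk z)
    (hd : ∀ z ∈ V, HasDerivAt gk (gk1 z) z) :
    ∀ z ∈ V, iteratedDeriv (k + 1) f z = gk1 z := by
  intro z hz
  rw [iteratedDeriv_succ]
  have he : iteratedDeriv k f =ᶠ[nhds z] gk :=
    Filter.eventuallyEq_of_mem (hV.mem_nhds hz) hk
  rw [he.deriv_eq, (hd z hz).deriv]

lemma leibniz (hV : IsOpen V) {f g : ℂ → ℂ}
    (hf : DifferentiableOn ℂ f V) (hg : DifferentiableOn ℂ g V) :
    ∀ n, ∀ z ∈ V, iteratedDeriv n (fun w => f w * g w) z =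
      ∑ k ∈ Finset.range (n + 1),
        (n.choose k : ℂ) * (iteratedDeriv k f z * iteratedDeriv (n - k) g z) := by
  intro n
  induction n with
  | zero => intro z hz; simp
  | succ n ih =>
      intro z hz
      rw [iteratedDeriv_succ]
      have he : iteratedDeriv n (fun w => f w * g w) =ᶠ[nhds z]
          (fun w => ∑ k ∈ Finset.range (n + 1),
            (n.choose k : ℂ) * (iteratedDeriv k f w * iteratedDeriv (n - k) g w)) :=
        Filter.eventuallyEq_of_mem (hV.mem_nhds hz) ih
      rw [he.deriv_eq]
      have hterm : ∀ k ∈ Finset.range (n + 1), HasDerivAt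
          (fun w => (n.choose k : ℂ) * (iteratedDeriv k f w * iteratedDeriv (n - k) g w))
          ((n.choose k : ℂ) * (iteratedDeriv (k + 1) f z * iteratedDeriv (n - k) g z
            + iteratedDeriv k f z * iteratedDeriv (n - k + 1) g z)) z := by
        intro k _
        exact ((hasDerivAt_iteratedDeriv hV hf k hz).mul
          (hasDerivAt_iteratedDeriv hV hg (n - k) hz)).const_mul _
      rw [(HasDerivAt.fun_sum hterm).deriv]
      rw [Finset.sum_choose_succ_mul
        (fun i j => iteratedDeriv i f z * iteratedDeriv j g z) n]
      rw [← Finset.sum_add_distrib]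
      refine Finset.sum_congr rfl fun k hk => ?_
      have hkn : k ≤ n := Nat.lt_succ_iff.mp (Finset.mem_range.mp hk)
      have h1 : n + 1 - k = n - k + 1 := by omega
      rw [h1]
      ring

lemma iter_lin (hV : IsOpen V) {f g : ℂ → ℂ} (a b : ℂ)
    (hf : DifferentiableOn ℂ f V) (hg : DifferentiableOn ℂ g V) :
    ∀ n, ∀ z ∈ V, iteratedDeriv n (fun w => a * f w + b * g w) z =
      a * iteratedDeriv n f z + b * iteratedDeriv n g z := by
  intro n
  induction n with
  | zero => intro z hz; simp
  | succ n ih =>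
      intro z hz
      rw [iteratedDeriv_succ]
      have he : iteratedDeriv n (fun w => a * f w + b * g w) =ᶠ[nhds z]
          (fun w => a * iteratedDeriv n f w + b * iteratedDeriv n g w) :=
        Filter.eventuallyEq_of_mem (hV.mem_nhds hz) ih
      rw [he.deriv_eq]
      exact (((hasDerivAt_iteratedDeriv hV hf n hz).const_mul a).add
        ((hasDerivAt_iteratedDeriv hV hg n hz).const_mul b)).deriv

lemma iter_id_mul (hV : IsOpen V) {h : ℂ → ℂ} (hh : DifferentiableOn ℂ h V) :
    ∀ n, ∀ z ∈ V, iteratedDeriv n (fun w => w * h w) z =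
      z * iteratedDeriv n h z + (n : ℂ) * iteratedDeriv (n - 1) h z := by
  intro n
  induction n with
  | zero => intro z hz; simp
  | succ n ih =>
      intro z hz
      rw [iteratedDeriv_succ]
      have he : iteratedDeriv n (fun w => w * h w) =ᶠ[nhds z]
          (fun w => w * iteratedDeriv n h w + (n : ℂ) * iteratedDeriv (n - 1) h w) :=
        Filter.eventuallyEq_of_mem (hV.mem_nhds hz) ih
      rw [he.deriv_eq]
      have hd : HasDerivAt
          (fun w => w * iteratedDeriv n h w + (n : ℂ) * iteratedDeriv (n - 1) h w)
          ((1 * iteratedDeriv n h z + z * iteratedDeriv (n + 1) h z)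
            + (n : ℂ) * iteratedDeriv (n - 1 + 1) h z) z :=
        ((hasDerivAt_id z).mul (hasDerivAt_iteratedDeriv hV hh n hz)).add
          ((hasDerivAt_iteratedDeriv hV hh (n - 1) hz).const_mul _)
      rw [hd.deriv]
      have : (n : ℂ) * iteratedDeriv (n - 1 + 1) h z = (n : ℂ) * iteratedDeriv n h z := by
        cases n with
        | zero => simp
        | succ m => norm_num
      rw [this]
      push_cast
      ring

lemma itit (k : ℕ) (f : ℂ → ℂ) :
    ∀ n, iteratedDeriv n (iteratedDeriv k f) = iteratedDeriv (n + k) f := by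
  intro n
  induction n with
  | zero => simp
  | succ n ih =>
      rw [iteratedDeriv_succ, ih, ← iteratedDeriv_succ,
        show n + k + 1 = n + 1 + k by omega]

lemma iteratedDeriv_const' (n : ℕ) (c : ℂ) :
    iteratedDeriv (n + 1) (fun _ : ℂ => c) = fun _ => 0 := by
  induction n generalizing c with
  | zero => funext z; rw [iteratedDeriv_one]; simp
  | succ n ih =>
      rw [iteratedDeriv_succ', deriv_const']
      exact ih 0

/-! ### The Taylor coefficients of `g0` are the zigzag numbers -/

lemma g0_diff : DifferentiableOn ℂ g0 Udom :=
  fun z hz => (hd_g0 hz).differentiableAt.differentiableWithinAt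

lemma iterA : ∀ n : ℕ, iteratedDeriv n g0 0 = (A n : ℂ) := by
  intro n
  induction n using Nat.strong_induction_on with
  | _ n ih =>
    match n with
    | 0 => simp [g0, A]
    | 1 =>
        rw [iteratedDeriv_one, (hd_g0 zero_mem_Udom).deriv]
        simp [g1, A]
    | (n + 2) =>
        have hode : ∀ z ∈ Udom, deriv g0 z =
            2⁻¹ * 1 + 2⁻¹ * (g0 z * g0 z) := by
          intro z hz
          rw [(hd_g0 hz).deriv]
          have hpy := Complex.sin_sq_add_cos_sq z
          have h1 := one_sub_ne hz
          unfold g0 g1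
          field_simp
          linear_combination (-1) * hpy
        have hstep1 : iteratedDeriv (n + 2) g0 0 =
            iteratedDeriv (n + 1) (fun z => 2⁻¹ * 1 + 2⁻¹ * (g0 z * g0 z)) 0 := by
          rw [iteratedDeriv_succ']
          exact (Filter.eventuallyEq_of_mem (Udom_open.mem_nhds zero_mem_Udom)
            hode).iteratedDeriv_eq (n + 1)
        rw [hstep1]
        have hgg : DifferentiableOn ℂ (fun w => g0 w * g0 w) Udom :=
          fun z hz => ((hd_g0 hz).differentiableAt.mul
            (hd_g0 hz).differentiableAt).differentiableWithinAt
        rw [iter_lin Udom_open (2⁻¹ : ℂ) (2⁻¹ : ℂ)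
          (differentiableOn_const 1) hgg (n + 1) 0 zero_mem_Udom]
        rw [show (fun _ : ℂ => (1 : ℂ)) = (fun _ : ℂ => (1 : ℂ)) from rfl,
          iteratedDeriv_const' n 1]
        rw [leibniz Udom_open g0_diff g0_diff (n + 1) 0 zero_mem_Udom]
        have hsum : ∑ k ∈ Finset.range (n + 2),
            ((n + 1).choose k : ℂ) * (iteratedDeriv k g0 0 * iteratedDeriv (n + 1 - k) g0 0)
            = ∑ k ∈ Finset.range (n + 2),
              (((n + 1).choose k * A k * A (n + 1 - k) : ℕ) : ℂ) := by
          refine Finset.sum_congr rfl fun k hk => ?_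
          have hk2 : k < n + 2 := Finset.mem_range.mp hk
          rw [ih k (by omega), ih (n + 1 - k) (by omega)]
          push_cast
          ring
        rw [hsum, ← Nat.cast_sum, ← even_conv n]
        push_cast
        ring

/-! ### The combination function and its Taylor coefficients -/

def Fc : ℂ → ℂ := fun w => g5 w - 3 * (w * g4 w) - 8 * g3 w

lemma g3_diff : DifferentiableOn ℂ g3 Udom :=
  fun z hz => (hd_g3 hz).differentiableAt.differentiableWithinAt

lemma g4_diff : DifferentiableOn ℂ g4 Udom :=
  fun z hz => (hd_g4 hz).differentiableAt.differentiableWithinAt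

lemma g5_diff : DifferentiableOn ℂ g5 Udom := by
  intro z hz
  have h1 := one_sub_ne hz
  have hinv' : DifferentiableAt ℂ (fun w => (1 - Complex.sin w)⁻¹) z :=
    ((differentiableAt_const (1:ℂ)).sub Complex.differentiable_sin.differentiableAt).inv h1
  exact ((((Complex.differentiable_sin.differentiableAt.pow 2).add
    ((differentiableAt_const (13:ℂ)).mul Complex.differentiable_sin.differentiableAt)).add
    (differentiableAt_const (16:ℂ))).mul (hinv'.pow 3)).differentiableWithinAt

lemma Fc_diff : DifferentiableOn ℂ Fc Udom := by
  intro z hz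
  have h4 := (g4_diff z hz).differentiableAt (Udom_open.mem_nhds hz)
  have h3 := (g3_diff z hz).differentiableAt (Udom_open.mem_nhds hz)
  have h5 := (g5_diff z hz).differentiableAt (Udom_open.mem_nhds hz)
  exact ((h5.sub ((differentiableAt_const (3:ℂ)).mul
    (differentiableAt_id.mul h4))).sub
    ((differentiableAt_const (8:ℂ)).mul h3)).differentiableWithinAt

lemma iter_g0 :
    (∀ z ∈ Udom, iteratedDeriv 3 g0 z = g3 z) ∧
    (∀ z ∈ Udom, iteratedDeriv 4 g0 z = g4 z) ∧
    (∀ z ∈ Udom, iteratedDeriv 5 g0 z = g5 z) := by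
  have h0 : ∀ z ∈ Udom, iteratedDeriv 0 g0 z = g0 z := by
    intro z hz; rw [iteratedDeriv_zero]
  have h1 := deriv_step Udom_open h0 (fun z hz => hd_g0 hz)
  have h2 := deriv_step Udom_open h1 (fun z hz => hd_g1 hz)
  have h3 := deriv_step Udom_open h2 (fun z hz => hd_g2 hz)
  have h4 := deriv_step Udom_open h3 (fun z hz => hd_g3 hz)
  have h5 := deriv_step Udom_open h4 (fun z hz => hd_g4 hz)
  exact ⟨h3, h4, h5⟩

lemma iterFc (n : ℕ) :
    iteratedDeriv n Fc 0 = ((A (n + 5) : ℂ) - (3 * (n : ℂ) + 8) * (A (n + 3) : ℂ)) := by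
  obtain ⟨h3, h4, h5⟩ := iter_g0
  -- the auxiliary representation
  set Ψ : ℂ → ℂ := fun w => 1 * iteratedDeriv 5 g0 w + (-8) * iteratedDeriv 3 g0 w with hΨ
  set Θ : ℂ → ℂ := fun w => w * iteratedDeriv 4 g0 w with hΘ
  have hFΦ : ∀ z ∈ Udom, Fc z = 1 * Ψ z + (-3) * Θ z := by
    intro z hz
    simp only [hΨ, hΘ, Fc, h3 z hz, h4 z hz, h5 z hz]
    ring
  have hΨd : DifferentiableOn ℂ Ψ Udom := by
    intro z hz
    have i5 := ((itdiff Udom_open g0_diff 5) z hz).differentiableAt (Udom_open.mem_nhds hz)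
    have i3 := ((itdiff Udom_open g0_diff 3) z hz).differentiableAt (Udom_open.mem_nhds hz)
    exact (((differentiableAt_const (1:ℂ)).mul i5).add
      ((differentiableAt_const (-8:ℂ)).mul i3)).differentiableWithinAt
  have hΘd : DifferentiableOn ℂ Θ Udom := by
    intro z hz
    have i4 := ((itdiff Udom_open g0_diff 4) z hz).differentiableAt (Udom_open.mem_nhds hz)
    exact (differentiableAt_id.mul i4).differentiableWithinAt
  have hstep : iteratedDeriv n Fc 0 = iteratedDeriv n (fun w => 1 * Ψ w + (-3) * Θ w) 0 :=
    (Filter.eventuallyEq_of_mem (Udom_open.mem_nhds zero_mem_Udom) hFΦ).iteratedDeriv_eq n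
  rw [hstep, iter_lin Udom_open 1 (-3) hΨd hΘd n 0 zero_mem_Udom]
  have hΨval : iteratedDeriv n Ψ 0 = (A (n + 5) : ℂ) + (-8) * (A (n + 3) : ℂ) := by
    rw [hΨ, iter_lin Udom_open 1 (-8) (itdiff Udom_open g0_diff 5)
      (itdiff Udom_open g0_diff 3) n 0 zero_mem_Udom,
      itit 5 g0 n, itit 3 g0 n, iterA (n + 5), iterA (n + 3)]
    ring
  have hΘval : iteratedDeriv n Θ 0 = (n : ℂ) * (A (n + 3) : ℂ) := by
    rw [hΘ, iter_id_mul Udom_open (itdiff Udom_open g0_diff 4) n 0 zero_mem_Udom,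
      itit 4 g0 (n - 1)]
    have : (n : ℂ) * iteratedDeriv (n - 1 + 4) g0 0 = (n : ℂ) * (A (n + 3) : ℂ) := by
      cases n with
      | zero => simp
      | succ m =>
          rw [show m + 1 - 1 + 4 = m + 1 + 3 by omega, iterA (m + 1 + 3)]
    rw [this]
    ring
  rw [hΨval, hΘval]
  ring

end

end EgfAux

open Real in
/-- The exponential generating function for the multiboundary singularities `B_n^3`:
for `|t| < π/2`,
`∑ K n 3 · tⁿ/n! = 3( sin t(3 sin t + 7) − t cos t(5 + sin t) )/(1 − sin t)³`.
(The paper misprints the overall constant `3` as `7`.) -/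
theorem egf_K_three (t : ℝ) (ht : |t| < π / 2) :
    HasSum (fun n : ℕ => (K n 3 : ℝ) * t ^ n / n.factorial)
      (3 / (1 - Real.sin t) ^ 3 *
        (Real.sin t * (3 * Real.sin t + 7) - t * Real.cos t * (5 + Real.sin t))) := by
  classical
  open EgfAux in
  have hz : (t : ℂ) ∈ Metric.ball (0 : ℂ) (π / 2) := by
    rw [Metric.mem_ball, dist_zero_right, Complex.norm_real, Real.norm_eq_abs]
    exact ht
  have hFd : DifferentiableOn ℂ EgfAux.Fc (Metric.ball (0 : ℂ) (π / 2)) :=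
    EgfAux.Fc_diff.mono EgfAux.ball_subset_Udom
  have H := Complex.hasSum_taylorSeries_on_ball hFd hz
  have hsin1 : Real.sin t < 1 := by
    have habs := abs_lt.mp ht
    have h1 : t ∈ Set.Icc (-(π / 2)) (π / 2) := ⟨by linarith [habs.1], le_of_lt habs.2⟩
    have h2 : (π / 2) ∈ Set.Icc (-(π / 2)) (π / 2) := ⟨by linarith [Real.pi_pos], le_refl _⟩
    have h3 := Real.strictMonoOn_sin h1 h2 habs.2
    rwa [Real.sin_pi_div_two] at h3
  have hne : (1 : ℝ) - Real.sin t ≠ 0 := by linarith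
  have hterm : ∀ n : ℕ, (n.factorial : ℂ)⁻¹ • ((t : ℂ) - 0) ^ n • iteratedDeriv n EgfAux.Fc 0
      = (((K n 3 : ℝ) * t ^ n / n.factorial : ℝ) : ℂ) := by
    intro n
    rw [EgfAux.iterFc n, sub_zero]
    have hfac : (n.factorial : ℝ) ≠ 0 := Nat.cast_ne_zero.mpr n.factorial_ne_zero
    have hK : ((K (n : ℤ) 3 : ℤ) : ℝ) = (A (n + 5) : ℝ) - (3 * (n : ℝ) + 8) * (A (n + 3) : ℝ) := by
      rw [EgfAux.K3_eq n]; push_cast; ring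
    rw [smul_eq_mul, smul_eq_mul]
    rw [show ((K (n : ℤ) 3 : ℝ) * t ^ n / n.factorial : ℝ) =
      ((A (n + 5) : ℝ) - (3 * (n : ℝ) + 8) * (A (n + 3) : ℝ)) * t ^ n / n.factorial by
        rw [hK]]
    push_cast
    field_simp
  rw [funext hterm] at H
  have hFval : EgfAux.Fc (t : ℂ) = ((3 / (1 - Real.sin t) ^ 3 *
      (Real.sin t * (3 * Real.sin t + 7) - t * Real.cos t * (5 + Real.sin t)) : ℝ) : ℂ) := by
    have hC : (1 : ℂ) - Complex.sin (t : ℂ) ≠ 0 :=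
      EgfAux.one_sub_ne (EgfAux.ball_subset_Udom hz)
    rw [show ((3 / (1 - Real.sin t) ^ 3 *
        (Real.sin t * (3 * Real.sin t + 7) - t * Real.cos t * (5 + Real.sin t)) : ℝ) : ℂ) =
      3 / (1 - Complex.sin (t : ℂ)) ^ 3 * (Complex.sin (t : ℂ) * (3 * Complex.sin (t : ℂ) + 7)
        - (t : ℂ) * Complex.cos (t : ℂ) * (5 + Complex.sin (t : ℂ))) by push_cast; ring]
    unfold EgfAux.Fc EgfAux.g3 EgfAux.g4 EgfAux.g5
    field_simp
    ring
  rw [hFval] at H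
  exact Complex.hasSum_ofReal.mp H
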